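/- There is a constant c > 0 such that for all x ≥ 1 and all α ≤ β with α, β ∈ [x - 2(1+x²)^{1/4}, x + 2(1+x²)^{1/4}], one has |∫_α^β cos(e^ξ)/√(1+ξ²) dξ| ≤ c e^{-x/2}/√(1+x²). -/

import Mathlib

open Real intervalIntegral Set

noncomputable def Gaux (ξ : ℝ) : ℝ := Real.exp (-ξ) * (1 + ξ ^ 2) ^ (-(1/2) : ℝ)

noncomputable def Gaux' (ξ : ℝ) : ℝ :=
  -(Real.exp (-ξ) * ((1 + ξ + ξ ^ 2) * (1 + ξ ^ 2) ^ (-(3/2) : ℝ)))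

lemma base_pos (ξ : ℝ) : (0:ℝ) < 1 + ξ ^ 2 := by positivity

lemma rpow_split (ξ : ℝ) :
    (1 + ξ ^ 2) ^ (-(1/2) : ℝ) = (1 + ξ ^ 2) * (1 + ξ ^ 2) ^ (-(3/2) : ℝ) := by
  rw [show (-(1/2) : ℝ) = 1 + -(3/2) by norm_num, Real.rpow_add (base_pos ξ), Real.rpow_one]

lemma hasDerivAt_Gaux (ξ : ℝ) : HasDerivAt Gaux (Gaux' ξ) ξ := by
  have h1 : HasDerivAt (fun ξ : ℝ => Real.exp (-ξ)) (-Real.exp (-ξ)) ξ := by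
    simpa [Function.comp_def] using (Real.hasDerivAt_exp (-ξ)).comp ξ (hasDerivAt_neg ξ)
  have h2 : HasDerivAt (fun ξ : ℝ => 1 + ξ ^ 2) (2 * ξ) ξ := by
    simpa using (hasDerivAt_pow 2 ξ).const_add 1
  have h3 : HasDerivAt (fun ξ : ℝ => (1 + ξ ^ 2) ^ (-(1/2) : ℝ))
      (2 * ξ * (-(1/2)) * (1 + ξ ^ 2) ^ ((-(1/2) : ℝ) - 1)) ξ :=
    h2.rpow_const (Or.inl (ne_of_gt (base_pos ξ)))
  have h4 := h1.mul h3
  have heq : -Real.exp (-ξ) * (1 + ξ ^ 2) ^ (-(1/2) : ℝ) +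
      Real.exp (-ξ) * (2 * ξ * (-(1/2)) * (1 + ξ ^ 2) ^ ((-(1/2) : ℝ) - 1)) = Gaux' ξ := by
    have : ((-(1/2) : ℝ) - 1) = -(3/2) := by norm_num
    rw [this, rpow_split, Gaux']
    ring
  rw [← heq]
  exact h4

lemma rpow_nonneg' (ξ : ℝ) (p : ℝ) : (0:ℝ) ≤ (1 + ξ ^ 2) ^ p :=
  Real.rpow_nonneg (le_of_lt (base_pos ξ)) p

lemma Gaux'_nonpos (ξ : ℝ) : Gaux' ξ ≤ 0 := by
  rw [Gaux']
  have h1 : (0:ℝ) ≤ 1 + ξ + ξ ^ 2 := by nlinarith [sq_nonneg (1 + 2*ξ)]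
  have h2 := rpow_nonneg' ξ (-(3/2))
  have h3 := (Real.exp_pos (-ξ)).le
  nlinarith [mul_nonneg (mul_nonneg h3 h1) h2]

lemma Gaux_nonneg (ξ : ℝ) : 0 ≤ Gaux ξ :=
  mul_nonneg (Real.exp_pos _).le (rpow_nonneg' ξ _)

lemma Gaux_le (ξ : ℝ) : Gaux ξ ≤ Real.exp (-ξ) := by
  have h : (1 + ξ ^ 2) ^ (-(1/2) : ℝ) ≤ 1 :=
    Real.rpow_le_one_of_one_le_of_nonpos (by nlinarith [sq_nonneg ξ]) (by norm_num)
  calc Gaux ξ ≤ Real.exp (-ξ) * 1 :=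
        mul_le_mul_of_nonneg_left h (Real.exp_pos _).le
    _ = Real.exp (-ξ) := mul_one _

lemma cont_Gaux' : Continuous Gaux' := by
  apply Continuous.neg
  apply Continuous.mul (Real.continuous_exp.comp continuous_neg)
  apply Continuous.mul (by continuity)
  exact (continuous_const.add (continuous_pow 2)).rpow_const
    (fun ξ => Or.inl (ne_of_gt (base_pos ξ)))

/-- The key oscillatory bound via integration by parts. -/
lemma key_bound {α β : ℝ} (hab : α ≤ β) :
    |∫ ξ in α..β, Real.cos (Real.exp ξ) / Real.sqrt (1 + ξ ^ 2)| ≤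
      2 * Gaux β + 3 * Gaux α := by
  have hv : ∀ ξ : ℝ, HasDerivAt (fun t => Real.sin (Real.exp t))
      (Real.exp ξ * Real.cos (Real.exp ξ)) ξ := by
    intro ξ
    simpa [mul_comm, Function.comp_def] using (Real.hasDerivAt_sin (Real.exp ξ)).comp ξ (Real.hasDerivAt_exp ξ)
  have hint : IntervalIntegrable Gaux' MeasureTheory.volume α β :=
    cont_Gaux'.intervalIntegrable α β
  have hvint : IntervalIntegrable (fun ξ => Real.exp ξ * Real.cos (Real.exp ξ))
      MeasureTheory.volume α β :=
    (Real.continuous_exp.mul (Real.continuous_cos.comp Real.continuous_exp)).intervalIntegrable α β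
  have hibp := intervalIntegral.integral_mul_deriv_eq_deriv_mul
    (u := Gaux) (v := fun t => Real.sin (Real.exp t)) (u' := Gaux')
    (v' := fun ξ => Real.exp ξ * Real.cos (Real.exp ξ))
    (fun ξ _ => hasDerivAt_Gaux ξ) (fun ξ _ => hv ξ) hint hvint
  have hcongr : (∫ ξ in α..β, Real.cos (Real.exp ξ) / Real.sqrt (1 + ξ ^ 2)) =
      ∫ ξ in α..β, Gaux ξ * (Real.exp ξ * Real.cos (Real.exp ξ)) := by
    apply intervalIntegral.integral_congr
    intro ξ _
    have hp : ((1 + ξ^2) ^ ((1:ℝ)/2)) ≠ 0 := ne_of_gt (Real.rpow_pos_of_pos (base_pos ξ) _)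
    simp only [Gaux]
    rw [Real.sqrt_eq_rpow, Real.rpow_neg (base_pos ξ).le, Real.exp_neg]
    field_simp
  -- bound on the remaining integral
  have hFTC : (∫ ξ in α..β, Gaux' ξ) = Gaux β - Gaux α :=
    intervalIntegral.integral_eq_sub_of_hasDerivAt
      (fun ξ _ => hasDerivAt_Gaux ξ) hint
  have hrem : |∫ ξ in α..β, Gaux' ξ * Real.sin (Real.exp ξ)| ≤ Gaux α - Gaux β := by
    have h1 : |∫ ξ in α..β, Gaux' ξ * Real.sin (Real.exp ξ)| ≤
        ∫ ξ in α..β, |Gaux' ξ * Real.sin (Real.exp ξ)| :=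
      intervalIntegral.abs_integral_le_integral_abs hab
    have h2 : (∫ ξ in α..β, |Gaux' ξ * Real.sin (Real.exp ξ)|) ≤
        ∫ ξ in α..β, -Gaux' ξ := by
      apply intervalIntegral.integral_mono_on hab
      · exact ((cont_Gaux'.mul (Real.continuous_sin.comp Real.continuous_exp)).abs).intervalIntegrable α β
      · exact hint.neg
      · intro ξ _
        rw [abs_mul]
        have := Gaux'_nonpos ξ
        calc |Gaux' ξ| * |Real.sin (Real.exp ξ)| ≤ |Gaux' ξ| * 1 :=
              mul_le_mul_of_nonneg_left (Real.abs_sin_le_one _) (abs_nonneg _)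
          _ = -Gaux' ξ := by rw [mul_one, abs_of_nonpos this]
    have h3 : (∫ ξ in α..β, -Gaux' ξ) = Gaux α - Gaux β := by
      rw [intervalIntegral.integral_neg, hFTC]; ring
    linarith
  rw [hcongr, hibp]
  have hsb : |Real.sin (Real.exp β)| ≤ 1 := Real.abs_sin_le_one _
  have hsa : |Real.sin (Real.exp α)| ≤ 1 := Real.abs_sin_le_one _
  have hga := Gaux_nonneg α
  have hgb := Gaux_nonneg β
  have h1 : |Gaux β * Real.sin (Real.exp β)| ≤ Gaux β := by
    rw [abs_mul, abs_of_nonneg hgb]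
    nlinarith
  have h2 : |Gaux α * Real.sin (Real.exp α)| ≤ Gaux α := by
    rw [abs_mul, abs_of_nonneg hga]
    nlinarith
  have hmono : Gaux β ≤ Gaux α := by
    have h0 : 0 ≤ ∫ ξ in α..β, -Gaux' ξ :=
      intervalIntegral.integral_nonneg hab (fun ξ _ => neg_nonneg.mpr (Gaux'_nonpos ξ))
    rw [intervalIntegral.integral_neg, hFTC] at h0
    linarith
  calc |Gaux β * Real.sin (Real.exp β) - Gaux α * Real.sin (Real.exp α) -
        ∫ ξ in α..β, Gaux' ξ * Real.sin (Real.exp ξ)| ≤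
      |Gaux β * Real.sin (Real.exp β)| + |Gaux α * Real.sin (Real.exp α)| +
        |∫ ξ in α..β, Gaux' ξ * Real.sin (Real.exp ξ)| := by
        have h1 := abs_add_le (Gaux β * Real.sin (Real.exp β) - Gaux α * Real.sin (Real.exp α))
          (-(∫ ξ in α..β, Gaux' ξ * Real.sin (Real.exp ξ)))
        have h2 := abs_add_le (Gaux β * Real.sin (Real.exp β)) (-(Gaux α * Real.sin (Real.exp α)))
        simp only [sub_eq_add_neg, abs_neg] at h1 h2 ⊢
        linarith
    _ ≤ 2 * Gaux β + 3 * Gaux α := by linarith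

/-- The elementary growth estimate. -/
lemma growth_bound {x : ℝ} (hx : 1 ≤ x) :
    5 * Real.sqrt (1 + x ^ 2) * Real.exp (2 * (1 + x ^ 2) ^ ((1:ℝ)/4)) ≤
      Real.exp 21 * Real.exp (x / 2) := by
  have hx0 : (0:ℝ) ≤ x := by linarith
  have hs : Real.sqrt x ^ 2 = x := Real.sq_sqrt hx0
  have hsn : 0 ≤ Real.sqrt x := Real.sqrt_nonneg x
  -- (a) sqrt(1+x^2) ≤ 2x
  have ha : Real.sqrt (1 + x ^ 2) ≤ 2 * x := by
    rw [show (2:ℝ) * x = Real.sqrt ((2*x)^2) from (Real.sqrt_sq (by linarith)).symm]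
    apply Real.sqrt_le_sqrt
    nlinarith
  -- (b) (1+x^2)^(1/4) ≤ 2 √x
  have hb : (1 + x ^ 2) ^ ((1:ℝ)/4) ≤ 2 * Real.sqrt x := by
    have h16 : (1 + x ^ 2) ≤ (2 * Real.sqrt x) ^ (4:ℕ) := by
      have : (2 * Real.sqrt x) ^ (4:ℕ) = 16 * x ^ 2 := by
        have : (2 * Real.sqrt x) ^ (4:ℕ) = 16 * (Real.sqrt x ^ 2) ^ 2 := by ring
        rw [this, hs]
      rw [this]; nlinarith
    calc (1 + x ^ 2) ^ ((1:ℝ)/4) ≤ ((2 * Real.sqrt x) ^ (4:ℕ)) ^ ((1:ℝ)/4) :=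
          Real.rpow_le_rpow (base_pos x).le h16 (by norm_num)
      _ = 2 * Real.sqrt x := by
          rw [← Real.rpow_natCast (2 * Real.sqrt x) 4, ← Real.rpow_mul (by positivity)]
          norm_num
  -- (c) 4√x ≤ x/4 + 16
  have hc : 4 * Real.sqrt x ≤ x / 4 + 16 := by
    nlinarith [sq_nonneg (Real.sqrt x - 8)]
  -- (d) 10 x ≤ 40 exp(x/4)
  have hd : 10 * x ≤ 40 * Real.exp (x / 4) := by
    nlinarith [Real.add_one_le_exp (x / 4)]
  have hexp1 : Real.exp (2 * (1 + x ^ 2) ^ ((1:ℝ)/4)) ≤ Real.exp (x / 4 + 16) := by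
    apply Real.exp_le_exp.mpr
    nlinarith
  have h40 : (40:ℝ) ≤ Real.exp 5 := by
    have h : Real.exp 5 = Real.exp 1 ^ (5:ℕ) := by
      rw [← Real.exp_nat_mul]; norm_num
    have h27 : (2.7:ℝ) ≤ Real.exp 1 := by nlinarith [Real.exp_one_gt_d9]
    calc (40:ℝ) ≤ 2.7 ^ (5:ℕ) := by norm_num
      _ ≤ Real.exp 1 ^ (5:ℕ) := pow_le_pow_left₀ (by norm_num) h27 5
      _ = Real.exp 5 := h.symm
  have hpos4 : (0:ℝ) < Real.exp (x/4) := Real.exp_pos _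
  calc 5 * Real.sqrt (1 + x ^ 2) * Real.exp (2 * (1 + x ^ 2) ^ ((1:ℝ)/4))
      ≤ (10 * x) * Real.exp (x / 4 + 16) := by
        apply mul_le_mul _ hexp1 (Real.exp_pos _).le (by nlinarith)
        nlinarith
    _ = (10 * x) * (Real.exp (x/4) * Real.exp 16) := by rw [← Real.exp_add]
    _ ≤ (40 * Real.exp (x/4)) * (Real.exp (x/4) * Real.exp 16) := by
        apply mul_le_mul_of_nonneg_right hd
        positivity
    _ = 40 * Real.exp 16 * (Real.exp (x/4) * Real.exp (x/4)) := by ring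
    _ = 40 * Real.exp 16 * Real.exp (x/2) := by
        rw [← Real.exp_add, show x/4 + x/4 = x/2 by ring]
    _ ≤ Real.exp 5 * Real.exp 16 * Real.exp (x/2) := by
        apply mul_le_mul_of_nonneg_right _ (Real.exp_pos _).le
        exact mul_le_mul_of_nonneg_right h40 (Real.exp_pos _).le
    _ = Real.exp 21 * Real.exp (x / 2) := by rw [← Real.exp_add]; norm_num

theorem stmt_15 : ∃ c : ℝ, 0 < c ∧ ∀ x ≥ (1:ℝ), ∀ α β : ℝ, α ≤ β →
    α ∈ Set.Icc (x - 2 * (1 + x ^ 2) ^ ((1:ℝ)/4)) (x + 2 * (1 + x ^ 2) ^ ((1:ℝ)/4)) →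
    β ∈ Set.Icc (x - 2 * (1 + x ^ 2) ^ ((1:ℝ)/4)) (x + 2 * (1 + x ^ 2) ^ ((1:ℝ)/4)) →
    |∫ ξ in α..β, Real.cos (Real.exp ξ) / Real.sqrt (1 + ξ ^ 2)| ≤
      c * Real.exp (-x / 2) / Real.sqrt (1 + x ^ 2) := by
  refine ⟨Real.exp 21, Real.exp_pos _, fun x hx α β hab hα hβ => ?_⟩
  set T : ℝ := 2 * (1 + x ^ 2) ^ ((1:ℝ)/4) with hT
  have hbound := key_bound hab
  have hGa : Gaux α ≤ Real.exp (-(x - T)) :=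
    (Gaux_le α).trans (Real.exp_le_exp.mpr (by linarith [hα.1]))
  have hGb : Gaux β ≤ Real.exp (-(x - T)) :=
    (Gaux_le β).trans (Real.exp_le_exp.mpr (by linarith [hβ.1, hα.1]))
  have h5 : |∫ ξ in α..β, Real.cos (Real.exp ξ) / Real.sqrt (1 + ξ ^ 2)| ≤
      5 * Real.exp (-(x - T)) := by
    have := Gaux_nonneg α
    have := Gaux_nonneg β
    linarith
  refine h5.trans ?_
  have hgrow := growth_bound hx
  have hsq : (0:ℝ) < Real.sqrt (1 + x ^ 2) := Real.sqrt_pos.mpr (base_pos x)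
  rw [ge_iff_le] at hx
  -- 5 exp(-(x-T)) ≤ exp 21 * exp(-x/2) / sqrt(1+x^2)
  rw [le_div_iff₀ hsq]
  have hexpand : Real.exp (-(x - T)) = Real.exp T * Real.exp (-x) := by
    rw [← Real.exp_add]; ring_nf
  have hx2 : Real.exp (-x / 2) = Real.exp (x / 2) * Real.exp (-x) := by
    rw [← Real.exp_add]; ring_nf
  rw [hexpand, hx2]
  have hep : (0:ℝ) < Real.exp (-x) := Real.exp_pos _
  calc 5 * (Real.exp T * Real.exp (-x)) * Real.sqrt (1 + x ^ 2)
      = (5 * Real.sqrt (1 + x ^ 2) * Real.exp T) * Real.exp (-x) := by ring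
    _ ≤ (Real.exp 21 * Real.exp (x / 2)) * Real.exp (-x) := by
        apply mul_le_mul_of_nonneg_right _ hep.le
        exact hgrow
    _ = Real.exp 21 * (Real.exp (x / 2) * Real.exp (-x)) := by ring
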